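/- Suppose F∞ = 0 and let c·(c·H₀² − v♯∞·h_max²) > 0 with c² = g·h_max + h_max·(h_max + 2H₀)·E∞/H₀³. If h₁ and h₂ are two profiles of the same maximal height h_max > H₀ and the same speed c, then there exists a ∈ ℝ such that h₂(x) = h₁(x − a) for all x ∈ ℝ; i.e. the solitary wave is unique up to translation. -/

import Mathlib

open Filter

open Set

noncomputable def odeF (g H₀ c vs Einf : ℝ) : ℝ × ℝ → ℝ × ℝ := fun u =>
  (u.2, (((u.1 - H₀) / (2 * u.1)) * (2 * c ^ 2 * H₀ - g * u.1 * (u.1 + H₀))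
        - (u.1 ^ 3 / H₀ ^ 3 - 1) * Einf
        + (c ^ 2 / 3) * H₀ ^ 2 * u.2 ^ 2 / u.1) /
      ((1/3) * c * (c * H₀ ^ 2 - vs * u.1 ^ 2)))

lemma coeff_pos (H₀ c vs hmax h : ℝ) (hH : 0 < H₀)
    (hcrit : 0 < c * (c * H₀ ^ 2 - vs * hmax ^ 2))
    (h0 : 0 < h) (hle : h ≤ hmax) :
    0 < (1/3) * c * (c * H₀ ^ 2 - vs * h ^ 2) := by
  have hc : c ≠ 0 := by rintro rfl; simp at hcrit
  have hsq : h ^ 2 ≤ hmax ^ 2 := by nlinarith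
  rcases le_or_gt (c * vs) 0 with hcv | hcv
  · have h1 : c * vs * h ^ 2 ≤ 0 := mul_nonpos_of_nonpos_of_nonneg hcv (sq_nonneg h)
    have h2 : 0 < c ^ 2 * H₀ ^ 2 := by positivity
    nlinarith
  · have h1 : c * vs * h ^ 2 ≤ c * vs * hmax ^ 2 := by nlinarith
    nlinarith

lemma deriv_contDiff_of_two {h : ℝ → ℝ} (hC2 : ContDiff ℝ 2 h) : ContDiff ℝ 1 (deriv h) := by
  have h2 : ContDiff ℝ ((1 : ℕ) + 1) h := by norm_num; exact hC2
  exact (contDiff_succ_iff_deriv.mp h2).2.2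

lemma traj_hasDerivAt (g H₀ c vs Einf hmax : ℝ) (hH : 0 < H₀)
    (hcrit : 0 < c * (c * H₀ ^ 2 - vs * hmax ^ 2))
    (h : ℝ → ℝ) (hC2 : ContDiff ℝ 2 h) (hpos : ∀ x, 0 < h x) (hle : ∀ x, h x ≤ hmax)
    (hode : ∀ x, (1/3) * c * (c * H₀ ^ 2 - vs * (h x) ^ 2) * deriv (deriv h) x =
      ((h x - H₀) / (2 * h x)) * (2 * c ^ 2 * H₀ - g * h x * (h x + H₀))
        - ((h x) ^ 3 / H₀ ^ 3 - 1) * Einf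
        + (c ^ 2 / 3) * H₀ ^ 2 * (deriv h x) ^ 2 / h x) :
    ∀ x, HasDerivAt (fun y => (h y, deriv h y)) (odeF g H₀ c vs Einf (h x, deriv h x)) x := by
  have hd : ContDiff ℝ 1 (deriv h) := deriv_contDiff_of_two hC2
  intro x
  have hA := coeff_pos H₀ c vs hmax (h x) hH hcrit (hpos x) (hle x)
  have hd2 : deriv (deriv h) x =
      (((h x - H₀) / (2 * h x)) * (2 * c ^ 2 * H₀ - g * h x * (h x + H₀))
        - ((h x) ^ 3 / H₀ ^ 3 - 1) * Einf
        + (c ^ 2 / 3) * H₀ ^ 2 * (deriv h x) ^ 2 / h x) /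
      ((1/3) * c * (c * H₀ ^ 2 - vs * (h x) ^ 2)) :=
    (eq_div_iff hA.ne').mpr (by rw [mul_comm]; exact hode x)
  have H1 : HasDerivAt h (deriv h x) x :=
    ((hC2.differentiable (by norm_num)) x).hasDerivAt
  have H2 : HasDerivAt (deriv h) (deriv (deriv h) x) x :=
    ((hd.differentiable one_ne_zero) x).hasDerivAt
  have := H1.prodMk H2
  simp only [odeF]
  rw [← hd2]
  exact this
lemma exists_pos_lower_bound (h : ℝ → ℝ) (H₀ : ℝ) (hH : 0 < H₀)
    (hcont : Continuous h) (hpos : ∀ x, 0 < h x)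
    (htop : Tendsto h atTop (nhds H₀)) (hbot : Tendsto h atBot (nhds H₀)) :
    ∃ m, 0 < m ∧ ∀ x, m ≤ h x := by
  have h1 : ∀ᶠ x in atTop, H₀ / 2 < h x := htop.eventually (eventually_gt_nhds (by linarith))
  have h2 : ∀ᶠ x in atBot, H₀ / 2 < h x := hbot.eventually (eventually_gt_nhds (by linarith))
  obtain ⟨R, hR⟩ := eventually_atTop.mp h1
  obtain ⟨L, hL⟩ := eventually_atBot.mp h2
  obtain ⟨x₀, -, hx₀⟩ := isCompact_Icc.exists_isMinOn
    (⟨min L R, le_refl _, min_le_max⟩ : (Icc (min L R) (max L R)).Nonempty) hcont.continuousOn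
  refine ⟨min (H₀ / 2) (h x₀), lt_min (by linarith) (hpos x₀), fun x => ?_⟩
  by_cases hx : x ∈ Icc (min L R) (max L R)
  · exact le_trans (min_le_right _ _) (hx₀ hx)
  · rw [mem_Icc, not_and_or, not_le, not_le] at hx
    rcases hx with hx | hx
    · exact le_trans (min_le_left _ _) (hL x (le_of_lt (lt_of_lt_of_le hx (min_le_left _ _)))).le
    · exact le_trans (min_le_left _ _) (hR x (le_of_lt (lt_of_le_of_lt (le_max_right _ _) hx))).le

lemma exists_abs_bound (φ : ℝ → ℝ) (hcont : Continuous φ)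
    (htop : Tendsto φ atTop (nhds 0)) (hbot : Tendsto φ atBot (nhds 0)) :
    ∃ M, 0 < M ∧ ∀ x, |φ x| ≤ M := by
  have hball : ∀ᶠ y in nhds (0:ℝ), y ∈ Ioo (-1 : ℝ) 1 := Ioo_mem_nhds (by norm_num) (by norm_num)
  obtain ⟨R, hR⟩ := eventually_atTop.mp (htop.eventually hball)
  obtain ⟨L, hL⟩ := eventually_atBot.mp (hbot.eventually hball)
  obtain ⟨x₀, -, hx₀⟩ := isCompact_Icc.exists_isMaxOn
    (⟨min L R, le_refl _, min_le_max⟩ : (Icc (min L R) (max L R)).Nonempty)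
    hcont.abs.continuousOn
  refine ⟨max 1 |φ x₀|, lt_max_of_lt_left one_pos, fun x => ?_⟩
  by_cases hx : x ∈ Icc (min L R) (max L R)
  · exact le_trans (hx₀ hx) (le_max_right _ _)
  · rw [mem_Icc, not_and_or, not_le, not_le] at hx
    rcases hx with hx | hx
    · have := hL x (le_of_lt (lt_of_lt_of_le hx (min_le_left _ _)))
      rw [mem_Ioo] at this
      exact le_trans (abs_le.mpr ⟨this.1.le, this.2.le⟩) (le_max_left _ _)
    · have := hR x (le_of_lt (lt_of_le_of_lt (le_max_right _ _) hx))
      rw [mem_Ioo] at this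
      exact le_trans (abs_le.mpr ⟨this.1.le, this.2.le⟩) (le_max_left _ _)

lemma odeF_contDiffOn (g H₀ c vs Einf : ℝ) (hH : 0 < H₀) :
    ContDiffOn ℝ 1 (odeF g H₀ c vs Einf)
      {u : ℝ × ℝ | 0 < u.1 ∧ 0 < (1/3) * c * (c * H₀ ^ 2 - vs * u.1 ^ 2)} := by
  intro u hu
  obtain ⟨h0, hA⟩ := hu
  apply ContDiffAt.contDiffWithinAt
  apply ContDiffAt.prodMk contDiffAt_snd
  apply ContDiffAt.div
  · apply ContDiffAt.add
    · apply ContDiffAt.sub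
      · apply ContDiffAt.mul
        · exact ((contDiffAt_fst.sub contDiffAt_const).div
            (contDiffAt_const.mul contDiffAt_fst) (by positivity))
        · exact contDiffAt_const.sub
            ((contDiffAt_const.mul contDiffAt_fst).mul (contDiffAt_fst.add contDiffAt_const))
      · exact ((contDiffAt_fst.pow 3).div contDiffAt_const (by positivity)).sub
          contDiffAt_const |>.mul contDiffAt_const
    · exact ((contDiffAt_const.mul contDiffAt_const).mul (contDiffAt_snd.pow 2)).div
        contDiffAt_fst (ne_of_gt h0)
  · exact (contDiffAt_const.mul contDiffAt_const).mul
      (contDiffAt_const.sub (contDiffAt_const.mul (contDiffAt_fst.pow 2)))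
  · exact ne_of_gt hA

/-- Uniqueness up to translation of the solitary wave of given
maximal height `hmax` and speed `c` (case `F∞ = 0`). -/
theorem solitary_wave_unique_up_to_translation
    (g H₀ c vs Einf hmax : ℝ) (hg : 0 < g) (hH : 0 < H₀) (hc : c ≠ 0)
    (hE : 0 < Einf) (hmax_gt : H₀ < hmax)
    (hcrit : 0 < c * (c * H₀ ^ 2 - vs * hmax ^ 2))
    (hspeed : c ^ 2 = g * hmax + hmax * (hmax + 2 * H₀) * Einf / H₀ ^ 3)
    (h₁ h₂ : ℝ → ℝ)
    (hC2₁ : ContDiff ℝ 2 h₁) (hpos₁ : ∀ x, 0 < h₁ x)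
    (hode₁ : ∀ x, (1/3) * c * (c * H₀ ^ 2 - vs * (h₁ x) ^ 2) * deriv (deriv h₁) x =
      ((h₁ x - H₀) / (2 * h₁ x)) * (2 * c ^ 2 * H₀ - g * h₁ x * (h₁ x + H₀))
        - ((h₁ x) ^ 3 / H₀ ^ 3 - 1) * Einf
        + (c ^ 2 / 3) * H₀ ^ 2 * (deriv h₁ x) ^ 2 / h₁ x)
    (htop₁ : Tendsto h₁ atTop (nhds H₀)) (hbot₁ : Tendsto h₁ atBot (nhds H₀))
    (htop₁' : Tendsto (deriv h₁) atTop (nhds 0))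
    (hbot₁' : Tendsto (deriv h₁) atBot (nhds 0))
    (hle₁ : ∀ x, h₁ x ≤ hmax) (hatt₁ : ∃ x, h₁ x = hmax)
    (hC2₂ : ContDiff ℝ 2 h₂) (hpos₂ : ∀ x, 0 < h₂ x)
    (hode₂ : ∀ x, (1/3) * c * (c * H₀ ^ 2 - vs * (h₂ x) ^ 2) * deriv (deriv h₂) x =
      ((h₂ x - H₀) / (2 * h₂ x)) * (2 * c ^ 2 * H₀ - g * h₂ x * (h₂ x + H₀))
        - ((h₂ x) ^ 3 / H₀ ^ 3 - 1) * Einf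
        + (c ^ 2 / 3) * H₀ ^ 2 * (deriv h₂ x) ^ 2 / h₂ x)
    (htop₂ : Tendsto h₂ atTop (nhds H₀)) (hbot₂ : Tendsto h₂ atBot (nhds H₀))
    (htop₂' : Tendsto (deriv h₂) atTop (nhds 0))
    (hbot₂' : Tendsto (deriv h₂) atBot (nhds 0))
    (hle₂ : ∀ x, h₂ x ≤ hmax) (hatt₂ : ∃ x, h₂ x = hmax) :
    ∃ a : ℝ, ∀ x, h₂ x = h₁ (x - a) := by
  classical
  set f := odeF g H₀ c vs Einf with hf_def
  -- bounds
  obtain ⟨m₁, hm₁, hm₁'⟩ := exists_pos_lower_bound h₁ H₀ hH hC2₁.continuous hpos₁ htop₁ hbot₁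
  obtain ⟨m₂, hm₂, hm₂'⟩ := exists_pos_lower_bound h₂ H₀ hH hC2₂.continuous hpos₂ htop₂ hbot₂
  obtain ⟨M₁, hM₁, hM₁'⟩ := exists_abs_bound (deriv h₁)
    (deriv_contDiff_of_two hC2₁).continuous htop₁' hbot₁'
  obtain ⟨M₂, hM₂, hM₂'⟩ := exists_abs_bound (deriv h₂)
    (deriv_contDiff_of_two hC2₂).continuous htop₂' hbot₂'
  set m := min m₁ m₂ with hm_def
  set M := max M₁ M₂ with hM_def
  have hm0 : 0 < m := lt_min hm₁ hm₂
  set S : Set (ℝ × ℝ) := Set.Icc m hmax ×ˢ Set.Icc (-M) M with hS_def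
  set U : Set (ℝ × ℝ) :=
    {u : ℝ × ℝ | 0 < u.1 ∧ 0 < (1/3) * c * (c * H₀ ^ 2 - vs * u.1 ^ 2)} with hU_def
  have hSU : S ⊆ U := by
    rintro ⟨u1, u2⟩ ⟨⟨hu1, hu1'⟩, -⟩
    exact ⟨lt_of_lt_of_le hm0 hu1, coeff_pos H₀ c vs hmax u1 hH hcrit
      (lt_of_lt_of_le hm0 hu1) hu1'⟩
  have hUopen : IsOpen U := by
    apply IsOpen.inter
    · exact isOpen_lt continuous_const continuous_fst
    · exact isOpen_lt continuous_const ((continuous_const.mul continuous_const).mul (continuous_const.sub (continuous_const.mul ((continuous_fst.pow 2)))))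
  have hcd := odeF_contDiffOn g H₀ c vs Einf hH
  have hScomp : IsCompact S := isCompact_Icc.prod isCompact_Icc
  have hfcont : ContinuousOn (fderiv ℝ f) S :=
    (hcd.continuousOn_fderiv_of_isOpen hUopen le_rfl).mono hSU
  obtain ⟨C, hC⟩ := hScomp.exists_bound_of_continuousOn hfcont
  have hlip : LipschitzOnWith C.toNNReal f S := by
    apply Convex.lipschitzOnWith_of_nnnorm_hasFDerivWithin_le
      (f' := fun u => fderiv ℝ f u)
    · intro u hu
      exact (((hcd.contDiffAt (hUopen.mem_nhds (hSU hu))).differentiableAt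
        one_ne_zero).hasFDerivAt).hasFDerivWithinAt
    · intro u hu
      rw [← norm_toNNReal]
      exact Real.toNNReal_mono (hC u hu)
    · exact (convex_Icc _ _).prod (convex_Icc _ _)
  -- trajectories
  have traj₁ := traj_hasDerivAt g H₀ c vs Einf hmax hH hcrit h₁ hC2₁ hpos₁ hle₁ hode₁
  have traj₂ := traj_hasDerivAt g H₀ c vs Einf hmax hH hcrit h₂ hC2₂ hpos₂ hle₂ hode₂
  -- maxima
  obtain ⟨x₁, hx₁⟩ := hatt₁
  obtain ⟨x₂, hx₂⟩ := hatt₂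
  have hmax₁ : IsLocalMax h₁ x₁ :=
    Filter.Eventually.of_forall fun y => by rw [hx₁]; exact hle₁ y
  have hmax₂ : IsLocalMax h₂ x₂ :=
    Filter.Eventually.of_forall fun y => by rw [hx₂]; exact hle₂ y
  have hd₁0 : deriv h₁ x₁ = 0 := hmax₁.deriv_eq_zero
  have hd₂0 : deriv h₂ x₂ = 0 := hmax₂.deriv_eq_zero
  refine ⟨x₂ - x₁, fun x => ?_⟩
  -- the two curves
  set u₂ : ℝ → ℝ × ℝ := fun y => (h₂ y, deriv h₂ y) with hu₂_def
  set w : ℝ → ℝ × ℝ := fun y => (h₁ (y - (x₂ - x₁)), deriv h₁ (y - (x₂ - x₁))) with hw_def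
  have hw' : ∀ y, HasDerivAt w (f (w y)) y := by
    intro y
    have := (traj₁ (y - (x₂ - x₁))).scomp y ((hasDerivAt_id y).sub_const (x₂ - x₁))
    rw [one_smul] at this
    exact this
  have hmemS₂ : ∀ y, u₂ y ∈ S :=
    fun y => ⟨⟨le_trans (min_le_right _ _) (hm₂' y), hle₂ y⟩,
      abs_le.mp (le_trans (hM₂' y) (le_max_right _ _))⟩
  have hmemSw : ∀ y, w y ∈ S :=
    fun y => ⟨⟨le_trans (min_le_left _ _) (hm₁' _), hle₁ _⟩,
      abs_le.mp (le_trans (hM₁' _) (le_max_left _ _))⟩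
  have heq : u₂ x₂ = w x₂ := by
    simp only [hu₂_def, hw_def]
    rw [show x₂ - (x₂ - x₁) = x₁ by ring, hx₁, hx₂, hd₁0, hd₂0]
  set T : ℝ := |x - x₂| + 1 with hT_def
  have hx_mem : x ∈ Set.Ioo (x₂ - T) (x₂ + T) := by
    constructor
    · have := abs_sub_le_iff.mp (le_refl |x - x₂|)
      linarith [this.2]
    · have := abs_sub_le_iff.mp (le_refl |x - x₂|)
      linarith [this.1]
  have ht₀_mem : x₂ ∈ Set.Ioo (x₂ - T) (x₂ + T) := by
    constructor <;> [linarith [abs_nonneg (x - x₂)]; linarith [abs_nonneg (x - x₂)]]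
  have key : Set.EqOn u₂ w (Set.Ioo (x₂ - T) (x₂ + T)) := by
    apply ODE_solution_unique_of_mem_Ioo (v := fun _ => f) (s := fun _ => S)
      (fun _ _ => hlip) ht₀_mem
      (fun t _ => ⟨traj₂ t, hmemS₂ t⟩) (fun t _ => ⟨hw' t, hmemSw t⟩) heq
  have := key hx_mem
  exact congrArg Prod.fst this
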